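/- arXiv:1204.1442 — 4 statements merged into one kernel-verified Lean document; each statement's English description precedes it below -/
import Mathlib

section
/- Let $a(\theta) = 1 - i\frac{\mu k}{h}\sin\theta - \frac{2(1-\rho)k}{h^2}\sin^2\frac{\theta}{2}$, $b(\theta) = -i\frac{\sqrt{\rho k}}{h}\sin\theta$, $c(\theta) = -\frac{2\rho k}{h^2}\sin^2\frac{\theta}{2}$. Then for all $\theta$, $|a|^2 + |b|^2 + 3|c|^2 + a c^* + a^* c = 1 - 4\sin^2\frac{\theta}{2}\left\{\frac{k}{h^2} - (1+2\rho^2)\left(\frac{k}{h^2}\right)^2\sin^2\frac{\theta}{2} - \left(\left(\frac{\mu k}{h}\right)^2 + \frac{\rho k}{h^2}\right)\cos^2\frac{\theta}{2}\right\}$. -/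
open Complex

lemma aux_comb (A B Bb C : ℝ) :
    (((‖(A : ℂ) + (B : ℝ) * Complex.I‖ : ℝ) : ℂ) ^ 2
      + ((‖((0:ℝ) : ℂ) + (Bb : ℝ) * Complex.I‖ : ℝ) : ℂ) ^ 2
      + 3 * ((‖((C : ℝ) : ℂ)‖ : ℝ) : ℂ) ^ 2)
      + ((A : ℂ) + (B : ℝ) * Complex.I) * (starRingEnd ℂ) ((C : ℝ) : ℂ)
      + (starRingEnd ℂ) ((A : ℂ) + (B : ℝ) * Complex.I) * ((C : ℝ) : ℂ)
    = ((A ^ 2 + B ^ 2 + Bb ^ 2 + 3 * C ^ 2 + 2 * A * C : ℝ) : ℂ) := by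
  have h1 : ‖(A : ℂ) + (B : ℝ) * Complex.I‖ ^ 2 = A ^ 2 + B ^ 2 := by
    rw [Complex.sq_norm]; simpa using Complex.normSq_add_mul_I A B
  have h2 : ‖((0:ℝ) : ℂ) + (Bb : ℝ) * Complex.I‖ ^ 2 = Bb ^ 2 := by
    rw [Complex.sq_norm]; simpa using Complex.normSq_add_mul_I 0 Bb
  have h3 : ‖((C : ℝ) : ℂ)‖ ^ 2 = C ^ 2 := by
    rw [Complex.sq_norm, Complex.normSq_ofReal]; ring
  rw [← Complex.ofReal_pow, ← Complex.ofReal_pow, ← Complex.ofReal_pow, h1, h2, h3,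
    map_add, Complex.conj_ofReal, map_mul, Complex.conj_ofReal,
    Complex.conj_I, Complex.conj_ofReal]
  push_cast
  ring_nf

/-- Fourier symbol identity for the Milstein finite difference scheme. -/
theorem stmt_2 (μ ρ k h : ℝ) (hρ0 : 0 ≤ ρ) (hρ1 : ρ ≤ 1) (hk : 0 < k) (hh : 0 < h)
    (a b c : ℝ → ℂ)
    (ha : ∀ θ, a θ = 1 - Complex.I * (μ * k / h) * Real.sin θ
        - (2 * (1 - ρ) * k / h ^ 2) * Real.sin (θ / 2) ^ 2)
    (hb : ∀ θ, b θ = -Complex.I * (Real.sqrt (ρ * k) / h) * Real.sin θ)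
    (hc : ∀ θ, c θ = -(2 * ρ * k / h ^ 2) * Real.sin (θ / 2) ^ 2) :
    ∀ θ : ℝ,
      (‖a θ‖ ^ 2 + ‖b θ‖ ^ 2 + 3 * ‖c θ‖ ^ 2 : ℂ)
        + a θ * (starRingEnd ℂ) (c θ) + (starRingEnd ℂ) (a θ) * c θ =
      1 - 4 * Real.sin (θ / 2) ^ 2 *
        ((k / h ^ 2 : ℝ)
          - (1 + 2 * ρ ^ 2) * (k / h ^ 2) ^ 2 * Real.sin (θ / 2) ^ 2
          - ((μ * k / h) ^ 2 + ρ * k / h ^ 2) * Real.cos (θ / 2) ^ 2 : ℝ) := by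
  intro θ
  have hsq : Real.sqrt (ρ * k) ^ 2 = ρ * k := Real.sq_sqrt (by positivity)
  have hsin : Real.sin θ = 2 * Real.sin (θ / 2) * Real.cos (θ / 2) := by
    rw [← Real.sin_two_mul]; ring_nf
  have haθ : a θ = ((1 - 2 * (1 - ρ) * k / h ^ 2 * Real.sin (θ / 2) ^ 2 : ℝ) : ℂ)
      + ((-(μ * k / h * Real.sin θ) : ℝ) : ℂ) * Complex.I := by
    rw [ha]; push_cast; ring
  have hbθ : b θ = (((0:ℝ)) : ℂ)
      + ((-(Real.sqrt (ρ * k) / h * Real.sin θ) : ℝ) : ℂ) * Complex.I := by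
    rw [hb]; push_cast; ring
  have hcθ : c θ = ((-(2 * ρ * k / h ^ 2 * Real.sin (θ / 2) ^ 2) : ℝ) : ℂ) := by
    rw [hc]; push_cast; ring
  rw [haθ, hbθ, hcθ, aux_comb]
  rw [show ((1 : ℂ) - 4 * (Real.sin (θ / 2) : ℂ) ^ 2 *
      ((k / h ^ 2 - (1 + 2 * ρ ^ 2) * (k / h ^ 2) ^ 2 * Real.sin (θ / 2) ^ 2
        - ((μ * k / h) ^ 2 + ρ * k / h ^ 2) * Real.cos (θ / 2) ^ 2 : ℝ) : ℂ)) =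
      (((1 - 4 * Real.sin (θ / 2) ^ 2 *
        (k / h ^ 2 - (1 + 2 * ρ ^ 2) * (k / h ^ 2) ^ 2 * Real.sin (θ / 2) ^ 2
        - ((μ * k / h) ^ 2 + ρ * k / h ^ 2) * Real.cos (θ / 2) ^ 2) : ℝ)) : ℂ)
    from by push_cast; ring]
  rw [Complex.ofReal_inj, hsin]
  have hh0 : (h : ℝ) ≠ 0 := ne_of_gt hh
  linear_combination (4 * Real.sin (θ / 2) ^ 2 * Real.cos (θ / 2) ^ 2 / h ^ 2) * hsq
end

section
/- With $a, b, c$ as above, if $\mu^2 k \le 1-\rho$ and $k/h^2 \le (1+2\rho^2)^{-1}$, then for all $\theta \in \mathbb{R}$, $|a(\theta)+c(\theta)|^2 + |b(\theta)|^2 + 2|c(\theta)|^2 \le 1$. -/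
open Complex

lemma stmt_3_aux (K u m r : ℝ) (hK : 0 < K) (hu0 : 0 ≤ u) (hu1 : u ≤ 1)
    (hm0 : 0 ≤ m) (hr0 : 0 ≤ r) (hmr : m + r ≤ 1) (hK2 : K * (1 + 2 * r ^ 2) ≤ 1) :
    (1 - 2 * K * u) ^ 2 + (m + r) * K * (4 * u * (1 - u)) + 2 * (2 * r * K * u) ^ 2 ≤ 1 := by
  nlinarith [mul_nonneg (mul_nonneg (mul_nonneg hK.le hu0) (by linarith : (0:ℝ) ≤ 1 - u))
      (by linarith : (0:ℝ) ≤ 1 - (m + r)),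
    mul_nonneg (mul_nonneg (mul_nonneg hK.le hu0) hu0)
      (by linarith : (0:ℝ) ≤ 1 - K * (1 + 2 * r ^ 2))]

/-- Sufficiency of the two stability conditions for mean-square stability of every
Fourier mode of the Milstein finite difference scheme. -/
theorem stmt_3 (μ ρ k h : ℝ) (hρ0 : 0 ≤ ρ) (hρ1 : ρ ≤ 1) (hk : 0 < k) (hh : 0 < h)
    (a b c : ℝ → ℂ)
    (ha : ∀ θ, a θ = 1 - Complex.I * (μ * k / h) * Real.sin θ
        - (2 * (1 - ρ) * k / h ^ 2) * Real.sin (θ / 2) ^ 2)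
    (hb : ∀ θ, b θ = -Complex.I * (Real.sqrt (ρ * k) / h) * Real.sin θ)
    (hc : ∀ θ, c θ = -(2 * ρ * k / h ^ 2) * Real.sin (θ / 2) ^ 2)
    (h1 : μ ^ 2 * k ≤ 1 - ρ) (h2 : k / h ^ 2 ≤ (1 + 2 * ρ ^ 2)⁻¹) :
    ∀ θ : ℝ,
      ‖a θ + c θ‖ ^ 2 + ‖b θ‖ ^ 2 + 2 * ‖c θ‖ ^ 2 ≤ 1 := by
  intro θ
  set s : ℝ := Real.sin (θ / 2) with hsdef
  have hpos : (0:ℝ) < 1 + 2 * ρ ^ 2 := by positivity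
  have hK : k / h ^ 2 * (1 + 2 * ρ ^ 2) ≤ 1 := by
    calc k / h ^ 2 * (1 + 2 * ρ ^ 2) ≤ (1 + 2 * ρ ^ 2)⁻¹ * (1 + 2 * ρ ^ 2) :=
          mul_le_mul_of_nonneg_right h2 (le_of_lt hpos)
      _ = 1 := inv_mul_cancel₀ (ne_of_gt hpos)
  have hKpos : 0 < k / h ^ 2 := by positivity
  have hsin : Real.sin θ = 2 * s * Real.cos (θ / 2) := by
    rw [hsdef]
    have h' := Real.sin_two_mul (θ / 2)
    rw [show 2 * (θ / 2) = θ by ring] at h'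
    exact h'
  have ht2 : Real.sin θ ^ 2 = 4 * s ^ 2 * (1 - s ^ 2) := by
    rw [hsin]
    have := Real.sin_sq_add_cos_sq (θ / 2)
    nlinarith [this]
  have hs1 : s ^ 2 ≤ 1 := Real.sin_sq_le_one (θ / 2)
  have hs0 : 0 ≤ s ^ 2 := sq_nonneg s
  have hsq : Real.sqrt (ρ * k) ^ 2 = ρ * k := Real.sq_sqrt (by positivity)
  -- rewrite each term as a real normSq
  have e1 : a θ + c θ = ((1 - 2 * k / h ^ 2 * s ^ 2 : ℝ) : ℂ)
      + ((-(μ * k / h * Real.sin θ) : ℝ) : ℂ) * Complex.I := by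
    rw [ha, hc, hsdef]; push_cast; ring
  have e2 : b θ = ((0 : ℝ) : ℂ)
      + ((-(Real.sqrt (ρ * k) / h * Real.sin θ) : ℝ) : ℂ) * Complex.I := by
    rw [hb]; push_cast; ring
  have e3 : c θ = ((-(2 * ρ * k / h ^ 2 * s ^ 2) : ℝ) : ℂ) + ((0 : ℝ) : ℂ) * Complex.I := by
    rw [hc, hsdef]; push_cast; ring
  have A1 : ‖a θ + c θ‖ ^ 2
      = (1 - 2 * k / h ^ 2 * s ^ 2) ^ 2 + (-(μ * k / h * Real.sin θ)) ^ 2 := by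
    rw [e1, Complex.sq_norm, Complex.normSq_add_mul_I]
  have A2 : ‖b θ‖ ^ 2
      = 0 ^ 2 + (-(Real.sqrt (ρ * k) / h * Real.sin θ)) ^ 2 := by
    rw [e2, Complex.sq_norm, Complex.normSq_add_mul_I]
  have A3 : ‖c θ‖ ^ 2
      = (-(2 * ρ * k / h ^ 2 * s ^ 2)) ^ 2 + 0 ^ 2 := by
    rw [e3, Complex.sq_norm, Complex.normSq_add_mul_I]
  rw [A1, A2, A3]
  have hh2 : (0:ℝ) < h ^ 2 := by positivity
  -- reduce to the purely real inequality
  have key : (1 - 2 * (k / h ^ 2) * s ^ 2) ^ 2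
      + (μ ^ 2 * k + ρ) * (k / h ^ 2) * (4 * s ^ 2 * (1 - s ^ 2))
      + 2 * (2 * ρ * (k / h ^ 2) * s ^ 2) ^ 2 ≤ 1 :=
    stmt_3_aux (k / h ^ 2) (s ^ 2) (μ ^ 2 * k) ρ hKpos hs0 hs1
      (by positivity) hρ0 (by linarith) hK
  have hb2 : (-(Real.sqrt (ρ * k) / h * Real.sin θ)) ^ 2
      = ρ * (k / h ^ 2) * (4 * s ^ 2 * (1 - s ^ 2)) := by
    have e : (-(Real.sqrt (ρ * k) / h * Real.sin θ)) ^ 2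
        = Real.sqrt (ρ * k) ^ 2 / h ^ 2 * Real.sin θ ^ 2 := by ring
    rw [e, hsq, ht2]; ring
  have hmu2 : (-(μ * k / h * Real.sin θ)) ^ 2
      = μ ^ 2 * k * (k / h ^ 2) * (4 * s ^ 2 * (1 - s ^ 2)) := by
    have e : (-(μ * k / h * Real.sin θ)) ^ 2 = μ ^ 2 * k ^ 2 / h ^ 2 * Real.sin θ ^ 2 := by ring
    rw [e, ht2]; ring
  calc (1 - 2 * k / h ^ 2 * s ^ 2) ^ 2 + (-(μ * k / h * Real.sin θ)) ^ 2
        + (0 ^ 2 + (-(Real.sqrt (ρ * k) / h * Real.sin θ)) ^ 2)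
        + 2 * ((-(2 * ρ * k / h ^ 2 * s ^ 2)) ^ 2 + 0 ^ 2)
      = (1 - 2 * (k / h ^ 2) * s ^ 2) ^ 2
        + (μ ^ 2 * k + ρ) * (k / h ^ 2) * (4 * s ^ 2 * (1 - s ^ 2))
        + 2 * (2 * ρ * (k / h ^ 2) * s ^ 2) ^ 2 := by
        rw [hb2, hmu2]; ring
    _ ≤ 1 := key
end

section
/- If the mean-square amplification factor satisfies $|a(\theta)+c(\theta)|^2 + |b(\theta)|^2 + 2|c(\theta)|^2 \le 1$ for all $\theta$, then $\mu^2 k \le 1-\rho$ and $k/h^2 \le (1+2\rho^2)^{-1}$; i.e., the two stability conditions are necessary as well as sufficient. -/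
open Complex

set_option maxHeartbeats 1000000 in
/-- Necessity of the two stability conditions for mean-square stability of every
Fourier mode of the Milstein finite difference scheme. -/
theorem stmt_4 (μ ρ k h : ℝ) (hρ0 : 0 ≤ ρ) (hρ1 : ρ ≤ 1) (hk : 0 < k) (hh : 0 < h)
    (a b c : ℝ → ℂ)
    (ha : ∀ θ, a θ = 1 - Complex.I * (μ * k / h) * Real.sin θ
        - (2 * (1 - ρ) * k / h ^ 2) * Real.sin (θ / 2) ^ 2)
    (hb : ∀ θ, b θ = -Complex.I * (Real.sqrt (ρ * k) / h) * Real.sin θ)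
    (hc : ∀ θ, c θ = -(2 * ρ * k / h ^ 2) * Real.sin (θ / 2) ^ 2)
    (hstab : ∀ θ : ℝ,
      ‖a θ + c θ‖ ^ 2 + ‖b θ‖ ^ 2 + 2 * ‖c θ‖ ^ 2 ≤ 1) :
    μ ^ 2 * k ≤ 1 - ρ ∧ k / h ^ 2 ≤ (1 + 2 * ρ ^ 2)⁻¹ := by
  have hh2 : (0:ℝ) < h ^ 2 := by positivity
  have hρk : (0:ℝ) ≤ ρ * k := mul_nonneg hρ0 hk.le
  have hsq : Real.sqrt (ρ * k) ^ 2 = ρ * k := Real.sq_sqrt hρk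
  -- real form of the stability inequality
  have main : ∀ θ : ℝ,
      (1 - 2 * k / h ^ 2 * Real.sin (θ/2) ^ 2) ^ 2 + (μ * k / h * Real.sin θ) ^ 2
        + (Real.sqrt (ρ * k) / h * Real.sin θ) ^ 2
        + 2 * (2 * ρ * k / h ^ 2 * Real.sin (θ/2) ^ 2) ^ 2 ≤ 1 := by
    intro θ
    have e1 : a θ + c θ = ((1 - 2 * k / h ^ 2 * Real.sin (θ/2) ^ 2 : ℝ) : ℂ)
        + ((-(μ * k / h * Real.sin θ) : ℝ) : ℂ) * Complex.I := by
      rw [ha, hc]; push_cast; ring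
    have h1 : ‖a θ + c θ‖ ^ 2
        = (1 - 2 * k / h ^ 2 * Real.sin (θ/2) ^ 2) ^ 2 + (μ * k / h * Real.sin θ) ^ 2 := by
      rw [e1, Complex.sq_norm, Complex.normSq_add_mul_I]; ring
    have e2 : b θ = ((0 : ℝ) : ℂ) + ((-(Real.sqrt (ρ * k) / h * Real.sin θ) : ℝ) : ℂ)
        * Complex.I := by
      rw [hb]; push_cast; ring
    have h2 : ‖b θ‖ ^ 2 = (Real.sqrt (ρ * k) / h * Real.sin θ) ^ 2 := by
      rw [e2, Complex.sq_norm, Complex.normSq_add_mul_I]; ring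
    have e3 : c θ = ((-(2 * ρ * k / h ^ 2 * Real.sin (θ/2) ^ 2) : ℝ) : ℂ) := by
      rw [hc]; push_cast; ring
    have h3 : ‖c θ‖ ^ 2 = (2 * ρ * k / h ^ 2 * Real.sin (θ/2) ^ 2) ^ 2 := by
      rw [e3, Complex.sq_norm, Complex.normSq_ofReal]; ring
    have := hstab θ
    rw [h1, h2, h3] at this
    linarith
  -- key scalar inequality for each t ∈ (0,1]
  have key : ∀ t : ℝ, 0 < t → t ≤ 1 →
      (1 - t) * (μ ^ 2 * k + ρ) + k / h ^ 2 * t * (1 + 2 * ρ ^ 2) ≤ 1 := by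
    intro t ht0 ht1
    set θ := 2 * Real.arcsin (Real.sqrt t) with hθ
    have hst0 : (0:ℝ) ≤ Real.sqrt t := Real.sqrt_nonneg t
    have hst1 : Real.sqrt t ≤ 1 := by
      rw [show (1:ℝ) = Real.sqrt 1 by simp]; exact Real.sqrt_le_sqrt ht1
    have hs : Real.sin (θ/2) = Real.sqrt t := by
      have : θ/2 = Real.arcsin (Real.sqrt t) := by rw [hθ]; ring
      rw [this, Real.sin_arcsin (by linarith) hst1]
    have ht : Real.sin (θ/2) ^ 2 = t := by rw [hs, Real.sq_sqrt ht0.le]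
    have hcos : Real.cos (θ/2) ^ 2 = 1 - t := by
      have := Real.sin_sq_add_cos_sq (θ/2)
      linarith [ht]
    have hsinθ : Real.sin θ ^ 2 = 4 * t * (1 - t) := by
      have hθ2 : θ = 2 * (θ/2) := by ring
      rw [hθ2, Real.sin_two_mul]
      nlinarith [ht, hcos]
    have H := main θ
    rw [ht] at H
    have e1 : (μ * k / h * Real.sin θ) ^ 2 = (μ * k / h) ^ 2 * (4 * t * (1 - t)) := by
      rw [mul_pow, hsinθ]
    have e2 : (Real.sqrt (ρ * k) / h * Real.sin θ) ^ 2 = ρ * k / h ^ 2 * (4 * t * (1 - t)) := by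
      rw [mul_pow, div_pow, hsq, hsinθ]
    rw [e1, e2] at H
    set l := k / h ^ 2 with hl
    have hlpos : 0 < l := by rw [hl]; positivity
    have hkl : (μ * k / h) ^ 2 = μ ^ 2 * k * l := by rw [hl]; field_simp
    have hrk : ρ * k / h ^ 2 = ρ * l := by rw [hl]; ring
    have hck : 2 * ρ * k / h ^ 2 = 2 * ρ * l := by rw [hl]; ring
    have hlk : 2 * k / h ^ 2 = 2 * l := by rw [hl]; ring
    rw [hkl, hrk, hck, hlk] at H
    have hbr : 4 * l * t * ((1 - t) * (μ ^ 2 * k + ρ) + l * t * (1 + 2 * ρ ^ 2) - 1) ≤ 0 := by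
      have heq : (1 - 2 * l * t) ^ 2 + μ ^ 2 * k * l * (4 * t * (1 - t))
          + ρ * l * (4 * t * (1 - t)) + 2 * (2 * ρ * l * t) ^ 2
          = 1 + 4 * l * t * ((1 - t) * (μ ^ 2 * k + ρ) + l * t * (1 + 2 * ρ ^ 2) - 1) := by
        ring
      linarith [H, heq ▸ H]
    by_contra hcon
    push_neg at hcon
    have hpos : 0 < (1 - t) * (μ ^ 2 * k + ρ) + l * t * (1 + 2 * ρ ^ 2) - 1 := by linarith
    nlinarith [mul_pos (mul_pos (show (0:ℝ) < 4 * l by linarith) ht0) hpos, hbr]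
  have h2 : k / h ^ 2 * (1 + 2 * ρ ^ 2) ≤ 1 := by
    have := key 1 one_pos le_rfl
    linarith
  have hden : (0:ℝ) < 1 + 2 * ρ ^ 2 := by positivity
  constructor
  · by_contra hcon
    push_neg at hcon
    obtain ⟨A, hA⟩ : ∃ A : ℝ, A = μ ^ 2 * k + ρ := ⟨_, rfl⟩
    have hA1 : 1 < A := by rw [hA]; linarith
    obtain ⟨B, hB'⟩ : ∃ B : ℝ, B = k / h ^ 2 * (1 + 2 * ρ ^ 2) := ⟨_, rfl⟩
    have hAB : B < A := by rw [hB']; exact lt_of_le_of_lt h2 hA1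
    obtain ⟨t, htdef⟩ : ∃ t : ℝ, t = (A - 1) / (2 * (A - B)) := ⟨_, rfl⟩
    have htpos : 0 < t := by
      rw [htdef]; apply div_pos <;> linarith
    have htle : t ≤ 1 := by
      rw [htdef, div_le_one (by linarith)]
      linarith
    have hkt := key t htpos htle
    rw [← hA] at hkt
    have hBt : k / h ^ 2 * t * (1 + 2 * ρ ^ 2) = B * t := by rw [hB']; ring
    rw [hBt] at hkt
    have hteq : (1 - t) * A + B * t = A - t * (A - B) := by ring
    have hABne : A - B ≠ 0 := by linarith
    have htv : t * (A - B) = (A - 1) / 2 := by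
      rw [htdef]
      field_simp
    nlinarith [hkt, hteq, htv]
  · rw [inv_eq_one_div, le_div_iff₀ hden]
    linarith
end

section
/- Multilevel Monte Carlo complexity theorem: suppose there exist positive constants $\alpha, \beta, \gamma, c_1, c_2, c_3$ with $\alpha \ge \gamma/2$, and independent estimators $\hat{Y}_l$ based on $N_l$ samples such that (i) $|\mathbb{E}[\hat{P}_l - P]| \le c_1 2^{-\alpha l}$, (ii) $\mathbb{E}[\hat{Y}_0] = \mathbb{E}[\hat{P}_0]$ and $\mathbb{E}[\hat{Y}_l] = \mathbb{E}[\hat{P}_l - \hat{P}_{l-1}]$ for $l > 0$, (iii) $\mathbb{V}[\hat{Y}_l] \le c_2 N_l^{-1} 2^{-\beta l}$, (iv) the cost of $\hat{Y}_l$ is at most $c_3 N_l 2^{\gamma l}$. Then there is a constant $c_4$ such that for any $0 < \varepsilon < e^{-1}$ there exist $L$ and $(N_l)_{l\le L}$ such that $\hat{Y} = \sum_{l=0}^L \hat{Y}_l$ has mean-square error $\mathbb{E}[(\hat{Y} - \mathbb{E}[P])^2] < \varepsilon^2$ with total cost at most $c_4\varepsilon^{-2}$ if $\beta > \gamma$,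 $c_4\varepsilon^{-2}(\log\varepsilon)^2$ if $\beta = \gamma$, and $c_4\varepsilon^{-2-(\gamma-\beta)/\alpha}$ if $0 < \beta < \gamma$. -/
open MeasureTheory ProbabilityTheory Finset

lemma mlmc_geom_lt_one {s : ℝ} (h0 : 0 ≤ s) (h1 : s < 1) (n : ℕ) :
    ∑ i ∈ range n, s ^ i ≤ (1 - s)⁻¹ := by
  have hs : (0:ℝ) < 1 - s := by linarith
  rw [geom_sum_eq (by linarith) n]
  have h2 : (s ^ n - 1) / (s - 1) = (1 - s ^ n) / (1 - s) := by
    rw [← neg_div_neg_eq]; ring_nf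
  rw [h2, ← one_div]
  gcongr
  have : (0:ℝ) ≤ s ^ n := pow_nonneg h0 n
  linarith

lemma mlmc_geom_gt_one {s : ℝ} (h1 : 1 < s) (n : ℕ) :
    ∑ i ∈ range n, s ^ i ≤ s ^ n / (s - 1) := by
  have hs : (0:ℝ) < s - 1 := by linarith
  rw [geom_sum_eq (ne_of_gt h1) n]
  gcongr
  linarith

lemma mlmc_integral_sub_const_sq {Ω : Type*} [MeasurableSpace Ω] (P : Measure Ω)
    [IsProbabilityMeasure P] (X : Ω → ℝ) (hX : MemLp X 2 P) (c : ℝ) :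
    ∫ ω, (X ω - c) ^ 2 ∂P = variance X P + ((∫ ω, X ω ∂P) - c) ^ 2 := by
  have h1 : Integrable X P := hX.integrable one_le_two
  have h2 : Integrable (fun ω => X ω ^ 2) P := hX.integrable_sq
  have key : ∀ ω, (X ω - c)^2 = X ω^2 - 2*c*X ω + c^2 := fun ω => by ring
  have h3 : Integrable (fun ω => 2*c*X ω) P := h1.const_mul (2*c)
  have hsub : Integrable (fun ω => X ω^2 - 2*c*X ω) P := h2.sub h3
  rw [variance_eq_sub hX]
  simp only [key]
  rw [integral_add hsub (integrable_const _), integral_sub h2 h3,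
      integral_const_mul, integral_const]
  simp only [measure_univ, ENNReal.toReal_one, one_smul, Pi.pow_apply, probReal_univ]
  ring

set_option maxHeartbeats 1000000 in
/-- Multilevel Monte Carlo complexity theorem.  `Y l N` is the level-`l` estimator based
on `N` samples and `cost l N` its computational cost.  Under the weak-error, unbiasedness,
variance and cost assumptions (i)-(iv), for every accuracy `0 < ε < e⁻¹` there are a
finest level `L` and sample numbers `Nₗ` such that the multilevel estimator
`Ŷ = ∑_{l≤L} Y l Nₗ` has mean-square error below `ε²` at a total cost bounded by
`c₄ ε⁻²`, `c₄ ε⁻² (log ε)²`, or `c₄ ε^{-2-(γ-β)/α}` according to the sign of `β - γ`. -/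
theorem stmt_16 {Ω : Type*} [MeasurableSpace Ω] (P : Measure Ω) [IsProbabilityMeasure P]
    (α β γ c₁ c₂ c₃ : ℝ)
    (hα : 0 < α) (hβ : 0 < β) (hγ : 0 < γ)
    (hc₁ : 0 < c₁) (hc₂ : 0 < c₂) (hc₃ : 0 < c₃)
    (hαγ : γ / 2 ≤ α)
    (Pf : Ω → ℝ) (Phat : ℕ → Ω → ℝ)
    (hPf : Integrable Pf P) (hPhat : ∀ l, Integrable (Phat l) P)
    (Y : ℕ → ℕ → Ω → ℝ) (cost : ℕ → ℕ → ℝ)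
    (hYmeas : ∀ l N, MemLp (Y l N) 2 P)
    (hYindep : ∀ N : ℕ → ℕ, iIndepFun (fun l => Y l (N l)) P)
    (hi : ∀ l : ℕ, |(∫ ω, Phat l ω ∂P) - ∫ ω, Pf ω ∂P| ≤ c₁ * ((2 : ℝ) ^ (α * l))⁻¹)
    (hii0 : ∀ N : ℕ, 0 < N → (∫ ω, Y 0 N ω ∂P) = ∫ ω, Phat 0 ω ∂P)
    (hii : ∀ l : ℕ, 0 < l → ∀ N : ℕ, 0 < N →
      (∫ ω, Y l N ω ∂P) = (∫ ω, Phat l ω ∂P) - ∫ ω, Phat (l - 1) ω ∂P)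
    (hiii : ∀ (l N : ℕ), 0 < N →
      variance (Y l N) P ≤ c₂ * (N : ℝ)⁻¹ * ((2 : ℝ) ^ (β * l))⁻¹)
    (hiv : ∀ (l N : ℕ), 0 < N → cost l N ≤ c₃ * N * (2 : ℝ) ^ (γ * l)) :
    ∃ c₄ : ℝ, 0 < c₄ ∧
      ∀ ε : ℝ, 0 < ε → ε < Real.exp (-1) →
        ∃ (L : ℕ) (N : ℕ → ℕ), (∀ l ≤ L, 0 < N l) ∧
          (∫ ω, ((∑ l ∈ Finset.range (L + 1), Y l (N l) ω) - ∫ ω', Pf ω' ∂P) ^ 2 ∂P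
            < ε ^ 2) ∧
          (∑ l ∈ Finset.range (L + 1), cost l (N l) ≤
            if γ < β then c₄ * ε⁻¹ ^ (2 : ℝ)
            else if β = γ then c₄ * ε⁻¹ ^ (2 : ℝ) * Real.log ε ^ 2
            else c₄ * ε⁻¹ ^ (2 + (γ - β) / α)) := by
  have h21 : (1:ℝ) < 2 := one_lt_two
  have hl2 : (0:ℝ) < Real.log 2 := Real.log_pos h21
  have hpow : ∀ (a : ℝ) (l : ℕ), ((2:ℝ)^a)^l = (2:ℝ)^(a*(l:ℝ)) := fun a l => by
    rw [← Real.rpow_natCast ((2:ℝ)^a) l, ← Real.rpow_mul (by norm_num : (0:ℝ) ≤ 2)]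
  set δ := (γ - β) / 2 with hδ_def
  set s := (2:ℝ) ^ δ with hs_def
  set r := (2:ℝ) ^ γ with hr_def
  have hspos : 0 < s := Real.rpow_pos_of_pos two_pos δ
  have hr1 : 1 < r := (Real.one_lt_rpow_iff_of_pos two_pos).mpr (Or.inl ⟨h21, hγ⟩)
  set B := Real.sqrt 2 * max c₁ 1 with hB_def
  have hsqrt2 : (1:ℝ) ≤ Real.sqrt 2 := by
    rw [show (1:ℝ) = Real.sqrt 1 by simp]
    exact Real.sqrt_le_sqrt (by norm_num)
  have hB1 : (1:ℝ) ≤ B := by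
    have h := mul_le_mul hsqrt2 (le_max_right c₁ 1) zero_le_one
      (le_trans zero_le_one hsqrt2)
    simpa using h
  have hBpos : 0 < B := lt_of_lt_of_le one_pos hB1
  set b := B ^ (1/α) with hb_def
  have hb1 : (1:ℝ) ≤ b := Real.one_le_rpow hB1 (by positivity)
  have hbpos : 0 < b := lt_of_lt_of_le one_pos hb1
  set KT := r / (r - 1) * ((2:ℝ) ^ γ * b ^ γ) with hKT_def
  have hKTpos : 0 < KT := by
    apply mul_pos (div_pos (by linarith) (by linarith))
    exact mul_pos (Real.rpow_pos_of_pos two_pos γ) (Real.rpow_pos_of_pos hbpos γ)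
  set CL := (max (Real.log B) 0 + 1) / (α * Real.log 2) + 2 with hCL_def
  have hCLpos : 0 < CL := by positivity
  set KS := (4:ℝ) ^ δ * b ^ δ / (s - 1) with hKS_def
  set c₄ := max 1 (max (4*c₂*c₃*((1-s)⁻¹)^2 + c₃*KT)
      (max (4*c₂*c₃*CL^2 + c₃*KT) (4*c₂*c₃*KS^2 + c₃*KT))) with hc₄_def
  refine ⟨c₄, lt_of_lt_of_le one_pos (le_max_left _ _), fun ε hε hεe => ?_⟩
  set E := ε⁻¹ with hE_def
  have hEe : Real.exp 1 < E := by
    rw [Real.exp_neg] at hεe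
    have := inv_strictAnti₀ hε hεe
    rwa [inv_inv] at this
  have hexp1 : (1:ℝ) < Real.exp 1 := by
    calc (1:ℝ) = Real.exp 0 := (Real.exp_zero).symm
    _ < Real.exp 1 := Real.exp_lt_exp.mpr one_pos
  have hE1 : 1 < E := lt_trans hexp1 hEe
  have hEpos : (0:ℝ) < E := lt_trans one_pos hE1
  have hlogE : 1 ≤ Real.log E := by
    have := Real.log_le_log (Real.exp_pos 1) hEe.le
    rwa [Real.log_exp] at this
  have hεE : ε = E⁻¹ := by rw [hE_def, inv_inv]
  have hE2 : E ^ (2:ℝ) = E^2 := by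
    rw [show ((2:ℝ)) = ((2:ℕ):ℝ) by norm_num, Real.rpow_natCast]
  -- choice of L
  set x := Real.logb 2 (Real.sqrt 2 * c₁ * E) / α with hx_def
  set L := ⌈x⌉₊ with hL_def
  have htpos : 0 < Real.sqrt 2 * c₁ * E := by positivity
  have hxL : x ≤ (L:ℝ) := Nat.le_ceil x
  have hαL : Real.sqrt 2 * c₁ * E ≤ (2:ℝ) ^ (α * (L:ℝ)) := by
    conv_lhs => rw [← Real.rpow_logb two_pos (by norm_num) htpos]
    apply Real.rpow_le_rpow_of_exponent_le h21.le
    have hlogb : Real.logb 2 (Real.sqrt 2 * c₁ * E) = α * x := by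
      rw [hx_def]; field_simp
    rw [hlogb]
    exact mul_le_mul_of_nonneg_left hxL hα.le
  set y := max x 0 with hy_def
  have hy0 : 0 ≤ y := le_max_right _ _
  have hxy : x ≤ y := le_max_left _ _
  have hLy : (L:ℝ) ≤ y + 1 := by
    rcases le_or_gt x 0 with h | h
    · have h0 : L = 0 := Nat.ceil_eq_zero.mpr h
      rw [h0]; push_cast; linarith
    · have h2 : (L:ℝ) < x + 1 := Nat.ceil_lt_add_one h.le
      have h3 : y = x := max_eq_left h.le
      rw [h3]; linarith
  have h2y : (2:ℝ) ^ y ≤ b * E ^ (1/α) := by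
    have hE1α : (1:ℝ) ≤ E ^ (1/α) := Real.one_le_rpow hE1.le (by positivity)
    have hbE1 : (1:ℝ) ≤ b * E ^ (1/α) := by
      have h := mul_le_mul hb1 hE1α zero_le_one (le_trans zero_le_one hb1)
      simpa using h
    rcases le_or_gt x 0 with h | h
    · rw [hy_def, max_eq_right h, Real.rpow_zero]; exact hbE1
    · rw [hy_def, max_eq_left h.le]
      have hx2 : (2:ℝ) ^ x = (Real.sqrt 2 * c₁ * E) ^ (1/α) := by
        rw [hx_def, div_eq_mul_one_div, Real.rpow_mul (by norm_num : (0:ℝ) ≤ 2),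
            Real.rpow_logb two_pos (by norm_num) htpos]
      rw [hx2]
      calc (Real.sqrt 2 * c₁ * E) ^ (1/α) ≤ (B * E) ^ (1/α) := by
            apply Real.rpow_le_rpow htpos.le ?_ (by positivity)
            rw [hB_def]
            have h1 : c₁ ≤ max c₁ 1 := le_max_left _ _
            gcongr
        _ = b * E ^ (1/α) := by
            rw [Real.mul_rpow hBpos.le hEpos.le, hb_def]
  have hγα2 : γ / α ≤ 2 := by rw [div_le_iff₀ hα]; linarith
  have hγL : (2:ℝ) ^ (γ * (L:ℝ)) ≤ (2:ℝ)^γ * b^γ * E^2 := by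
    calc (2:ℝ)^(γ*(L:ℝ)) ≤ (2:ℝ)^(γ*(y+1)) := by
          apply Real.rpow_le_rpow_of_exponent_le h21.le
          exact mul_le_mul_of_nonneg_left hLy hγ.le
      _ = ((2:ℝ)^y)^γ * (2:ℝ)^γ := by
          rw [mul_add, mul_one, Real.rpow_add two_pos, mul_comm γ y,
              Real.rpow_mul (by norm_num : (0:ℝ) ≤ 2)]
      _ ≤ (b * E^(1/α))^γ * (2:ℝ)^γ := by
          gcongr
      _ = b^γ * E^(1/α*γ) * (2:ℝ)^γ := by
          rw [Real.mul_rpow hbpos.le (Real.rpow_nonneg hEpos.le _), ← Real.rpow_mul hEpos.le]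
      _ ≤ b^γ * E^(2:ℝ) * (2:ℝ)^γ := by
          have hEe2 : E^(1/α*γ) ≤ E^(2:ℝ) :=
            Real.rpow_le_rpow_of_exponent_le hE1.le
              (by rw [one_div, inv_mul_eq_div]; exact hγα2)
          gcongr
      _ = (2:ℝ)^γ * b^γ * E^2 := by rw [hE2]; ring
  have hT : ∑ l ∈ range (L+1), r^l ≤ KT * E^2 := by
    calc ∑ l ∈ range (L+1), r^l ≤ r^(L+1)/(r-1) := mlmc_geom_gt_one hr1 _
      _ = r/(r-1) * r^L := by rw [pow_succ]; ring
      _ ≤ r/(r-1) * ((2:ℝ)^γ * b^γ * E^2) := by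
          have hrL : r^L = (2:ℝ)^(γ*(L:ℝ)) := by rw [hr_def, hpow]
          have h0 : (0:ℝ) ≤ r/(r-1) :=
            div_nonneg (by linarith only [hr1]) (by linarith only [hr1])
          rw [hrL]
          exact mul_le_mul_of_nonneg_left hγL h0
      _ = KT * E^2 := by rw [hKT_def]; ring
  set S := ∑ l ∈ range (L+1), s^l with hS_def
  have hS1 : (1:ℝ) ≤ S := by
    have h := Finset.single_le_sum (f := fun l => s^l)
      (fun i _ => (pow_nonneg hspos.le i)) (Finset.mem_range.mpr (Nat.succ_pos L))
    simpa using h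
  have hSpos : (0:ℝ) < S := lt_of_lt_of_le one_pos hS1
  set q := (2:ℝ) ^ (-((β+γ)/2)) with hq_def
  have hqpos : 0 < q := Real.rpow_pos_of_pos two_pos _
  set A := 4 * c₂ * S * E^2 with hA_def
  have hApos : 0 < A := mul_pos (mul_pos (mul_pos (by norm_num) hc₂) hSpos) (pow_pos hEpos 2)
  set N := fun l : ℕ => ⌈A * q^l⌉₊ with hN_def
  have hNpos : ∀ l, 0 < N l := fun l => Nat.ceil_pos.mpr (mul_pos hApos (pow_pos hqpos l))
  have hNge : ∀ l : ℕ, A * q^l ≤ (N l : ℝ) := fun l => Nat.le_ceil _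
  have hNle : ∀ l : ℕ, (N l : ℝ) ≤ A * q^l + 1 :=
    fun l => le_of_lt (Nat.ceil_lt_add_one (mul_pos hApos (pow_pos hqpos l)).le)
  refine ⟨L, N, fun l _ => hNpos l, ?_, ?_⟩
  · -- mean square error
    have hXmem : MemLp (fun ω => ∑ l ∈ range (L+1), Y l (N l) ω) 2 P :=
      memLp_finset_sum _ (fun l _ => hYmeas l (N l))
    rw [mlmc_integral_sub_const_sq P _ hXmem]
    have hvar : variance (fun ω => ∑ l ∈ range (L+1), Y l (N l) ω) P ≤ ε^2/4 := by
      have hfun : (fun ω => ∑ l ∈ range (L+1), Y l (N l) ω)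
          = ∑ l ∈ range (L+1), (fun ω => Y l (N l) ω) := by
        ext ω; simp
      rw [hfun, IndepFun.variance_sum (fun l _ => hYmeas l (N l))
        (fun i _ j _ hij => (hYindep N).indepFun hij)]
      have hterm : ∀ l ∈ range (L+1), variance (Y l (N l)) P ≤ ε^2/(4*S) * s^l := by
        intro l _
        refine (hiii l (N l) (hNpos l)).trans ?_
        have h1 : ((N l : ℕ):ℝ)⁻¹ ≤ (A * q^l)⁻¹ :=
          inv_anti₀ (mul_pos hApos (pow_pos hqpos l)) (hNge l)
        have h2pos : (0:ℝ) < (2:ℝ)^(β*(l:ℝ)) := Real.rpow_pos_of_pos two_pos _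
        calc c₂ * ((N l : ℕ):ℝ)⁻¹ * ((2:ℝ)^(β*(l:ℝ)))⁻¹
            ≤ c₂ * (A*q^l)⁻¹ * ((2:ℝ)^(β*(l:ℝ)))⁻¹ :=
              mul_le_mul_of_nonneg_right (mul_le_mul_of_nonneg_left h1 hc₂.le) (inv_nonneg.mpr h2pos.le)
          _ = ε^2/(4*S) * s^l := by
              have hql : q^l = (2:ℝ)^(-((β+γ)/2)*(l:ℝ)) := by rw [hq_def]; exact hpow _ l
              have hsl : s^l = (2:ℝ)^(δ*(l:ℝ)) := by rw [hs_def]; exact hpow _ l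
              have hsplit : (2:ℝ)^(δ*(l:ℝ)) *
                  ((2:ℝ)^(-((β+γ)/2)*(l:ℝ)) * (2:ℝ)^(β*(l:ℝ))) = 1 := by
                rw [← Real.rpow_add two_pos, ← Real.rpow_add two_pos,
                    show δ*(l:ℝ) + (-((β+γ)/2)*(l:ℝ) + β*(l:ℝ)) = 0 by rw [hδ_def]; ring]
                exact Real.rpow_zero 2
              have h2δ : (2:ℝ)^(δ*(l:ℝ)) =
                  ((2:ℝ)^(-((β+γ)/2)*(l:ℝ)) * (2:ℝ)^(β*(l:ℝ)))⁻¹ :=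
                eq_inv_of_mul_eq_one_left hsplit
              rw [hql, hsl, h2δ, hεE, hA_def, mul_inv, mul_inv]
              have hX : (2:ℝ)^(-((β+γ)/2)*(l:ℝ)) ≠ 0 :=
                ne_of_gt (Real.rpow_pos_of_pos two_pos _)
              have hZ : (2:ℝ)^(β*(l:ℝ)) ≠ 0 :=
                ne_of_gt (Real.rpow_pos_of_pos two_pos _)
              have hE0 : E ≠ 0 := ne_of_gt hEpos
              have hS0 : S ≠ 0 := ne_of_gt hSpos
              have hc0 : c₂ ≠ 0 := ne_of_gt hc₂
              field_simp
      calc ∑ l ∈ range (L+1), variance (Y l (N l)) P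
          ≤ ∑ l ∈ range (L+1), ε^2/(4*S) * s^l := Finset.sum_le_sum hterm
        _ = ε^2/(4*S) * S := by rw [← Finset.mul_sum]
        _ = ε^2/4 := by
            have hS0 : S ≠ 0 := ne_of_gt hSpos
            field_simp
    have htel : ∀ n : ℕ, ∑ l ∈ range (n+1), ∫ ω, Y l (N l) ω ∂P = ∫ ω, Phat n ω ∂P := by
      intro n
      induction n with
      | zero => simpa using hii0 (N 0) (hNpos 0)
      | succ n ih =>
        rw [Finset.sum_range_succ, ih, hii (n+1) (Nat.succ_pos n) (N (n+1)) (hNpos _)]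
        simp
    have hint : ∫ ω, (∑ l ∈ range (L+1), Y l (N l) ω) ∂P = ∫ ω, Phat L ω ∂P := by
      rw [integral_finset_sum _ (fun l _ => (hYmeas l (N l)).integrable one_le_two)]
      exact htel L
    have hbias : ((∫ ω, (∑ l ∈ range (L+1), Y l (N l) ω) ∂P) - ∫ ω', Pf ω' ∂P)^2 ≤ ε^2/2 := by
      rw [hint]
      have h1 : |(∫ ω, Phat L ω ∂P) - ∫ ω', Pf ω' ∂P| ≤ c₁ * ((2:ℝ)^(α*(L:ℝ)))⁻¹ := hi L
      have h2 : c₁ * ((2:ℝ)^(α*(L:ℝ)))⁻¹ ≤ c₁ * (Real.sqrt 2 * c₁ * E)⁻¹ := by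
        gcongr
      have h3 : c₁ * (Real.sqrt 2 * c₁ * E)⁻¹ = ε / Real.sqrt 2 := by
        rw [hεE]
        have hs2 : Real.sqrt 2 ≠ 0 := by positivity
        have hE0 : E ≠ 0 := ne_of_gt hEpos
        have hc0 : c₁ ≠ 0 := ne_of_gt hc₁
        field_simp
      have h4 : |(∫ ω, Phat L ω ∂P) - ∫ ω', Pf ω' ∂P| ≤ ε / Real.sqrt 2 := by
        rw [← h3]; exact h1.trans h2
      calc ((∫ ω, Phat L ω ∂P) - ∫ ω', Pf ω' ∂P)^2
          = |(∫ ω, Phat L ω ∂P) - ∫ ω', Pf ω' ∂P|^2 := (sq_abs _).symm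
        _ ≤ (ε / Real.sqrt 2)^2 := by
            apply pow_le_pow_left₀ (abs_nonneg _) h4
        _ = ε^2/2 := by rw [div_pow, Real.sq_sqrt (by norm_num : (0:ℝ) ≤ 2)]
    have hε2 : 0 < ε^2 := by positivity
    linarith only [hvar, hbias, hε2]
  · -- cost
    have hcb : ∀ l ∈ range (L+1), cost l (N l) ≤ c₃ * A * s^l + c₃ * r^l := by
      intro l _
      refine (hiv l (N l) (hNpos l)).trans ?_
      have h2pos : (0:ℝ) < (2:ℝ)^(γ*(l:ℝ)) := Real.rpow_pos_of_pos two_pos _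
      calc c₃ * ((N l : ℕ):ℝ) * (2:ℝ)^(γ*(l:ℝ))
          ≤ c₃ * (A * q^l + 1) * (2:ℝ)^(γ*(l:ℝ)) := by
            gcongr
            exact hNle l
        _ = c₃ * A * (q^l * (2:ℝ)^(γ*(l:ℝ))) + c₃ * (2:ℝ)^(γ*(l:ℝ)) := by ring
        _ = c₃ * A * s^l + c₃ * r^l := by
            have hqr : q^l * (2:ℝ)^(γ*(l:ℝ)) = s^l := by
              rw [hq_def, hpow, hs_def, hpow, ← Real.rpow_add two_pos]
              congr 1
              rw [hδ_def]; ring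
            have hrl : (2:ℝ)^(γ*(l:ℝ)) = r^l := by rw [hr_def, hpow]
            rw [hqr, hrl]
    have hsum : ∑ l ∈ range (L+1), cost l (N l) ≤ c₃*A*S + c₃ * (KT * E^2) := by
      calc ∑ l ∈ range (L+1), cost l (N l)
          ≤ ∑ l ∈ range (L+1), (c₃ * A * s^l + c₃ * r^l) := Finset.sum_le_sum hcb
        _ = c₃*A*S + c₃ * ∑ l ∈ range (L+1), r^l := by
            rw [Finset.sum_add_distrib, ← Finset.mul_sum, ← Finset.mul_sum]
        _ ≤ c₃*A*S + c₃ * (KT * E^2) := by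
            gcongr
    have hAS : c₃*A*S = 4*c₂*c₃*E^2*S^2 := by rw [hA_def]; ring
    have hE2' : E ^ (2:ℝ) = E^2 := hE2
    split_ifs with hb1' hb2'
    · -- γ < β
      have hδneg : δ < 0 := by rw [hδ_def]; linarith
      have hslt1 : s < 1 := Real.rpow_lt_one_of_one_lt_of_neg h21 hδneg
      have hSle : S ≤ (1-s)⁻¹ := mlmc_geom_lt_one hspos.le hslt1 _
      have h1s : (0:ℝ) < 1 - s := by linarith
      calc ∑ l ∈ range (L+1), cost l (N l) ≤ c₃*A*S + c₃ * (KT * E^2) := hsum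
        _ = 4*c₂*c₃*E^2*S^2 + c₃*KT*E^2 := by rw [hAS]; ring
        _ ≤ 4*c₂*c₃*E^2*((1-s)⁻¹)^2 + c₃*KT*E^2 := by
            have h := mul_le_mul_of_nonneg_left (pow_le_pow_left₀ hSpos.le hSle 2)
              (by positivity : (0:ℝ) ≤ 4*c₂*c₃*E^2)
            linarith
        _ = (4*c₂*c₃*((1-s)⁻¹)^2 + c₃*KT) * E^2 := by ring
        _ ≤ c₄ * E^2 := by
            gcongr
            exact le_trans (le_max_left _ _) (le_max_right _ _)
        _ = c₄ * E ^ (2:ℝ) := by rw [hE2']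
    · -- β = γ
      have hδ0 : δ = 0 := by rw [hδ_def, hb2']; ring
      have hs1 : s = 1 := by rw [hs_def, hδ0, Real.rpow_zero]
      have hSL : S = (L:ℝ) + 1 := by
        rw [hS_def]
        simp [hs1]
      have hlogε : Real.log E = - Real.log ε := by rw [hE_def, Real.log_inv]
      have hlogsq : Real.log E ^ 2 = Real.log ε ^ 2 := by rw [hlogε]; ring
      have hlogBle : Real.log (Real.sqrt 2 * c₁) ≤ max (Real.log B) 0 := by
        refine le_trans ?_ (le_max_left _ _)
        apply Real.log_le_log (by positivity)
        rw [hB_def]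
        gcongr
        exact le_max_left _ _
      have hxb : x ≤ (max (Real.log B) 0 + 1) / (α * Real.log 2) * Real.log E := by
        have key : Real.log (Real.sqrt 2 * c₁ * E) ≤ (max (Real.log B) 0 + 1) * Real.log E := by
          rw [Real.log_mul (by positivity) (ne_of_gt hEpos)]
          have h0 : 0 ≤ max (Real.log B) 0 := le_max_right _ _
          have h1 := mul_le_mul_of_nonneg_left hlogE h0
          linarith only [hlogBle, hlogE, h1]
        calc x = Real.log (Real.sqrt 2 * c₁ * E)/(Real.log 2 * α) := by
              rw [hx_def, Real.logb, div_div]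
          _ ≤ ((max (Real.log B) 0 + 1) * Real.log E)/(Real.log 2 * α) := by
              gcongr
          _ = (max (Real.log B) 0 + 1) / (α * Real.log 2) * Real.log E := by ring
      have hLCL : S ≤ CL * Real.log E := by
        rw [hSL, hCL_def]
        have h0 : 0 ≤ (max (Real.log B) 0 + 1) / (α * Real.log 2) * Real.log E := by positivity
        have hyb : y ≤ (max (Real.log B) 0 + 1) / (α * Real.log 2) * Real.log E :=
          max_le hxb h0
        have h1 : 0 ≤ (max (Real.log B) 0 + 1) / (α * Real.log 2) := by positivity
        have h2 : (L:ℝ) + 1 ≤ (max (Real.log B) 0 + 1) / (α * Real.log 2) * Real.log E + 2 := by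
          linarith only [hLy, hyb]
        have h3 : (2:ℝ) ≤ 2 * Real.log E := by linarith only [hlogE]
        calc (L:ℝ) + 1 ≤ (max (Real.log B) 0 + 1) / (α * Real.log 2) * Real.log E + 2 := h2
          _ ≤ (max (Real.log B) 0 + 1) / (α * Real.log 2) * Real.log E + 2 * Real.log E := by
              linarith only [h3]
          _ = ((max (Real.log B) 0 + 1) / (α * Real.log 2) + 2) * Real.log E := by ring
      have hlog1 : (1:ℝ) ≤ Real.log E ^ 2 := by
        have h := mul_le_mul hlogE hlogE zero_le_one (zero_le_one.trans hlogE)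
        calc (1:ℝ) = 1 * 1 := by ring
          _ ≤ Real.log E * Real.log E := h
          _ = Real.log E ^ 2 := by ring
      calc ∑ l ∈ range (L+1), cost l (N l) ≤ c₃*A*S + c₃ * (KT * E^2) := hsum
        _ = 4*c₂*c₃*E^2*S^2 + c₃*KT*E^2 := by rw [hAS]; ring
        _ ≤ 4*c₂*c₃*E^2*(CL * Real.log E)^2 + c₃*KT*E^2*(Real.log E^2) := by
            refine add_le_add ?_ ?_
            · exact mul_le_mul_of_nonneg_left (pow_le_pow_left₀ hSpos.le hLCL 2) (by positivity)
            · have hnn : (0:ℝ) ≤ c₃*KT*E^2 :=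
                mul_nonneg (mul_nonneg hc₃.le hKTpos.le) (sq_nonneg E)
              calc c₃*KT*E^2 = c₃*KT*E^2*1 := by ring
                _ ≤ c₃*KT*E^2*(Real.log E^2) := mul_le_mul_of_nonneg_left hlog1 hnn
        _ = (4*c₂*c₃*CL^2 + c₃*KT) * E^2 * Real.log E^2 := by ring
        _ ≤ c₄ * E^2 * Real.log E^2 := by
            gcongr
            exact le_trans (le_trans (le_max_left _ _) (le_max_right _ _)) (le_max_right _ _)
        _ = c₄ * E ^ (2:ℝ) * Real.log ε ^ 2 := by rw [hE2', hlogsq]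
    · -- β < γ
      have hβγ : β < γ := lt_of_le_of_ne (not_lt.mp hb1') hb2'
      have hδpos : 0 < δ := by rw [hδ_def]; linarith
      have hs1 : 1 < s := (Real.one_lt_rpow_iff_of_pos two_pos).mpr (Or.inl ⟨h21, hδpos⟩)
      have hs1' : (0:ℝ) < s - 1 := by linarith
      have hKSpos : 0 < KS := by
        rw [hKS_def]
        have h4 : (0:ℝ) < (4:ℝ)^δ := Real.rpow_pos_of_pos (by norm_num) δ
        have hb' : (0:ℝ) < b^δ := Real.rpow_pos_of_pos hbpos δ
        positivity
      have hsL : s^(L+1) ≤ (4:ℝ)^δ * b^δ * E^(δ/α) := by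
        rw [hs_def, hpow δ (L+1)]
        calc (2:ℝ)^(δ*((L+1:ℕ):ℝ)) ≤ (2:ℝ)^(δ*(y+2)) := by
              apply Real.rpow_le_rpow_of_exponent_le h21.le
              apply mul_le_mul_of_nonneg_left ?_ hδpos.le
              push_cast
              linarith
          _ = ((2:ℝ)^y)^δ * (2:ℝ)^(2*δ) := by
              rw [← Real.rpow_mul (by norm_num : (0:ℝ) ≤ 2), ← Real.rpow_add two_pos]
              congr 1
              ring
          _ ≤ (b * E^(1/α))^δ * (2:ℝ)^(2*δ) := by
              gcongr
          _ = (4:ℝ)^δ * b^δ * E^(δ/α) := by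
              rw [Real.mul_rpow hbpos.le (Real.rpow_nonneg hEpos.le _),
                  ← Real.rpow_mul hEpos.le]
              have h4 : (2:ℝ)^(2*δ) = (4:ℝ)^δ := by
                rw [show (4:ℝ) = (2:ℝ)^(2:ℝ) by
                      rw [show ((2:ℝ):ℝ) = ((2:ℕ):ℝ) by norm_num, Real.rpow_natCast]; norm_num,
                    ← Real.rpow_mul (by norm_num : (0:ℝ) ≤ 2)]
              rw [h4]
              rw [show 1/α*δ = δ/α by ring]
              ring
      have hSle : S ≤ KS * E^(δ/α) := by
        calc S ≤ s^(L+1)/(s-1) := mlmc_geom_gt_one hs1 _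
          _ ≤ ((4:ℝ)^δ * b^δ * E^(δ/α))/(s-1) := by gcongr
          _ = KS * E^(δ/α) := by rw [hKS_def]; ring
      have hEδpos : (0:ℝ) < E^(δ/α) := Real.rpow_pos_of_pos hEpos _
      have hS2 : S^2 ≤ KS^2 * E^((γ-β)/α) := by
        have h1 : S^2 ≤ (KS * E^(δ/α))^2 := pow_le_pow_left₀ hSpos.le hSle 2
        have h2 : (E^(δ/α))^2 = E^((γ-β)/α) := by
          rw [← Real.rpow_natCast (E^(δ/α)) 2, ← Real.rpow_mul hEpos.le]
          congr 1
          rw [hδ_def]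
          push_cast
          ring
        calc S^2 ≤ (KS * E^(δ/α))^2 := h1
          _ = KS^2 * (E^(δ/α))^2 := by ring
          _ = KS^2 * E^((γ-β)/α) := by rw [h2]
      have hexp : E^2 * E^((γ-β)/α) = E^(2 + (γ-β)/α) := by
        rw [Real.rpow_add hEpos, hE2']
      have hE2le : E^(2:ℝ) ≤ E^(2 + (γ-β)/α) := by
        apply Real.rpow_le_rpow_of_exponent_le hE1.le
        have h0 : 0 ≤ (γ-β)/α := div_nonneg (by linarith only [hβγ]) hα.le
        linarith only [h0]
      calc ∑ l ∈ range (L+1), cost l (N l) ≤ c₃*A*S + c₃ * (KT * E^2) := hsum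
        _ = 4*c₂*c₃*E^2*S^2 + c₃*KT*E^2 := by rw [hAS]; ring
        _ ≤ 4*c₂*c₃*E^2*(KS^2 * E^((γ-β)/α)) + c₃*KT*E^(2 + (γ-β)/α) := by
            refine add_le_add ?_ ?_
            · exact mul_le_mul_of_nonneg_left hS2 (by positivity)
            · rw [← hE2']
              exact mul_le_mul_of_nonneg_left hE2le (by positivity)
        _ = (4*c₂*c₃*KS^2) * (E^2 * E^((γ-β)/α)) + c₃*KT*E^(2 + (γ-β)/α) := by ring
        _ = (4*c₂*c₃*KS^2 + c₃*KT) * E^(2 + (γ-β)/α) := by rw [hexp]; ring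
        _ ≤ c₄ * E^(2 + (γ-β)/α) := by
            gcongr
            exact le_trans (le_trans (le_max_right _ _) (le_max_right _ _)) (le_max_right _ _)
end
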